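/- Let (θ,ρ) ∈ ℝ^{2d}, h > 0, R ≥ 1, M ∈ ℕ, B ∈ {0,1}^M, and write ℓ_min = ℓ_min(θ,ρ,B,h,R). Then for every ℓ < ℓ_min, the collection T([a_ℓ(B) : b_ℓ(B)]) is sub-U-turn free for (θ,ρ,h,R); that is, 𝟙_Uturn(ã,b̃,θ,ρ,h,R) = 0 for all [ã:b̃] ∈ T([a_ℓ(B) : b_ℓ(B)]). -/

import Mathlib

open MeasureTheory

noncomputable section

/-! ### Combinatorial definitions for NUTS orbit selection -/

/-- Floor midpoint `⌊(a+b)/2⌋`. -/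
def mid (a b : ℤ) : ℤ := (a + b) / 2

/-- `(−1)^x` for a bit `x`. -/
def signBit (x : Bool) : ℤ := if x then -1 else 1

/-- Left endpoint `a_ℓ(B)` of the orbit built from the Bernoulli directions `B` (1-indexed). -/
def aEnd (B : ℕ → Bool) : ℕ → ℤ
  | 0 => 0
  | ℓ + 1 => min (aEnd B ℓ) (aEnd B ℓ + signBit (B (ℓ + 1)) * 2 ^ ℓ)

/-- Right endpoint `b_ℓ(B)`. -/
def bEnd (B : ℕ → Bool) : ℕ → ℤ
  | 0 => 0
  | ℓ + 1 => max (bEnd B ℓ) (bEnd B ℓ + signBit (B (ℓ + 1)) * 2 ^ ℓ)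

/-- Proposed extension endpoint `ã_ℓ(B) = a_{ℓ−1}(B) + (−1)^{B_ℓ} 2^{ℓ−1}` (for `ℓ ≥ 1`). -/
def aT (B : ℕ → Bool) (ℓ : ℕ) : ℤ := aEnd B (ℓ - 1) + signBit (B ℓ) * 2 ^ (ℓ - 1)

/-- Proposed extension endpoint `b̃_ℓ(B) = b_{ℓ−1}(B) + (−1)^{B_ℓ} 2^{ℓ−1}` (for `ℓ ≥ 1`). -/
def bT (B : ℕ → Bool) (ℓ : ℕ) : ℤ := bEnd B (ℓ - 1) + signBit (B ℓ) * 2 ^ (ℓ - 1)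

/-- The binary string `β(L,a,b)`: `beta ℓ L a b i` is the `i`-th bit (1-indexed) of
`(β_i(L,a,b))_{i ∈ [1:ℓ]}`, where `[a:b]` is an interval with `b − a + 1 = 2^ℓ`. -/
def beta : ℕ → ℤ → ℤ → ℤ → ℕ → Bool
  | 0, _, _, _, _ => false
  | ℓ + 1, L, a, b, i =>
      if i = ℓ + 1 then decide (mid a b + 1 ≤ L)
      else if mid a b + 1 ≤ L then beta ℓ L (mid a b + 1) b i
      else beta ℓ L a (mid a b) i

/-- The transformed sequence `B*(L,a,b,B)`: bits `1..ℓ` come from `β(L,a,b)`, the rest from `B`. -/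
def bstar (ℓ : ℕ) (L a b : ℤ) (B : ℕ → Bool) : ℕ → Bool :=
  fun i => if 1 ≤ i ∧ i ≤ ℓ then beta ℓ L a b i else B i

/-- The domain `D`: tuples `(B, ℓ, a, b, L)` with `ℓ ∈ [1:M]`, `a = a_ℓ(B)`, `b = b_ℓ(B)`,
`a ≤ L ≤ b`. -/
def memD (M : ℕ) (B : ℕ → Bool) (ℓ : ℕ) (a b L : ℤ) : Prop :=
  1 ≤ ℓ ∧ ℓ ≤ M ∧ a = aEnd B ℓ ∧ b = bEnd B ℓ ∧ a ≤ L ∧ L ≤ b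

/-- The levels of the binary tree of subintervals of `[a:b]`: `treeLevel a b k` is the family of
intervals (coded as pairs) obtained from `[a:b]` by `k` successive halvings; with
`b − a + 1 = 2^ℓ` this is `T_{ℓ−k}([a:b])` of the paper. -/
def treeLevel (a b : ℤ) : ℕ → Set (ℤ × ℤ)
  | 0 => {(a, b)}
  | k + 1 => {p | ∃ q ∈ treeLevel a b k,
      p = (q.1, mid q.1 q.2) ∨ p = (mid q.1 q.2 + 1, q.2)}

/-- The binary tree `T([a:b]) = ∪_{j=0}^{ℓ} T_j([a:b])` of subintervals of an interval `[a:b]`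
with `b − a + 1 = 2^ℓ`. -/
def tree (ℓ : ℕ) (a b : ℤ) : Set (ℤ × ℤ) := ⋃ k ≤ ℓ, treeLevel a b k

/-! ### Leapfrog dynamics -/

/-- The state space `ℝ^d`. -/
abbrev ES (d : ℕ) := EuclideanSpace ℝ (Fin d)

/-- The momentum flip `S(θ,ρ) = (θ,−ρ)`. -/
def flipMom {d : ℕ} (p : ES d × ES d) : ES d × ES d := (p.1, -p.2)

/-- One leapfrog step of size `h` for the potential `U`. -/
def leapfrog {d : ℕ} (U : ES d → ℝ) (h : ℝ) (p : ES d × ES d) : ES d × ES d :=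
  let ρh := p.2 - (h / 2) • gradient U p.1
  let θ' := p.1 + h • ρh
  (θ', ρh - (h / 2) • gradient U θ')

/-- Integer iterates `Φ_h^i`, `i ∈ ℤ`, of the leapfrog integrator (negative iterates use the
inverse `S ∘ Φ_h ∘ S`). -/
def leapfrogIter {d : ℕ} (U : ES d → ℝ) (h : ℝ) : ℤ → ES d × ES d → ES d × ES d
  | Int.ofNat n => (leapfrog U h)^[n]
  | Int.negSucc n => (flipMom ∘ leapfrog U h ∘ flipMom)^[n + 1]

/-- The Hamiltonian `H(θ,ρ) = U(θ) + |ρ|²/2`. -/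
def Ham {d : ℕ} (U : ES d → ℝ) (p : ES d × ES d) : ℝ := U p.1 + (1 / 2) * ‖p.2‖ ^ 2

open Classical in
/-- The U-turn indicator `𝟙_Uturn(a,b,θ,ρ,h,R)` (coarse step size `hs`, fine step `hs/R`). -/
def uturnInd {d : ℕ} (U : ES d → ℝ) (hs : ℝ) (R : ℕ) (a b : ℤ) (p : ES d × ES d) : ℕ :=
  let qm := leapfrogIter U (hs / R) (R * a) p
  let qp := leapfrogIter U (hs / R) (R * b) p
  if (inner ℝ qp.2 (qp.1 - qm.1) : ℝ) < 0 ∨ (inner ℝ qm.2 (qp.1 - qm.1) : ℝ) < 0 then 1 else 0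

/-- The sub-U-turn indicator `𝟙_subUturn(a,b,θ,ρ,h,R)`, defined recursively by halving. -/
def subUturnInd {d : ℕ} (U : ES d → ℝ) (hs : ℝ) (R : ℕ) (p : ES d × ES d) (a b : ℤ) : ℕ :=
  if h : a < b then
    max (max (subUturnInd U hs R p a (mid a b)) (subUturnInd U hs R p (mid a b + 1) b))
      (uturnInd U hs R a b p)
  else 0
termination_by (b - a).toNat
decreasing_by
  · have h1 : a ≤ mid a b := by unfold mid; omega
    have h2 : mid a b < b := by unfold mid; omega
    omega
  · have h1 : a ≤ mid a b := by unfold mid; omega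
    have h2 : mid a b < b := by unfold mid; omega
    omega

/-- The number of doublings `ℓ_min(θ,ρ,B,h,R)` selected by the no-U-turn procedure with at most
`2^M` leapfrog iterates. -/
def ellMin {d : ℕ} (U : ES d → ℝ) (hs : ℝ) (R : ℕ) (M : ℕ) (B : ℕ → Bool)
    (p : ES d × ES d) : ℕ :=
  sInf ({ℓ | 1 ≤ ℓ ∧ ℓ ≤ M - 1 ∧
      (uturnInd U hs R (aEnd B ℓ) (bEnd B ℓ) p = 1 ∨
        subUturnInd U hs R p (aT B (ℓ + 1)) (bT B (ℓ + 1)) = 1)} ∪ {M})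

/-- The categorical (Boltzmann) index-selection kernel `Q(L | θ, ρ, a, b, h, R)`. -/
def Qkernel {d : ℕ} (U : ES d → ℝ) (hs : ℝ) (R : ℕ) (p : ES d × ES d)
    (a b L : ℤ) : ℝ :=
  if a ≤ L ∧ L ≤ b then
    Real.exp (-Ham U (leapfrogIter U (hs / R) (R * L) p)) /
      ∑ k ∈ Finset.Icc a b, Real.exp (-Ham U (leapfrogIter U (hs / R) (R * k) p))
  else 0

/-! ### The standard normal target -/

/-- One leapfrog step of size `h` for the standard normal potential `U(θ) = |θ|²/2`
(for which `∇U(θ) = θ`). -/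
def gaussLeapfrog {d : ℕ} (h : ℝ) (p : ES d × ES d) : ES d × ES d :=
  let ρh := p.2 - (h / 2) • p.1
  let θ' := p.1 + h • ρh
  (θ', ρh - (h / 2) • θ')

/-- Integer iterates of the standard normal leapfrog integrator. -/
def gaussLeapfrogIter {d : ℕ} (h : ℝ) : ℤ → ES d × ES d → ES d × ES d
  | Int.ofNat n => (gaussLeapfrog h)^[n]
  | Int.negSucc n => (flipMom ∘ gaussLeapfrog h ∘ flipMom)^[n + 1]

/-- The standard normal Hamiltonian `H(θ,ρ) = (|θ|² + |ρ|²)/2`. -/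
def gaussHam {d : ℕ} (p : ES d × ES d) : ℝ := (1 / 2) * (‖p.1‖ ^ 2 + ‖p.2‖ ^ 2)

/-- The modified Hamiltonian `H_h(θ,ρ) = (1 − h²/4)|θ|²/2 + |ρ|²/2` preserved by the standard
normal leapfrog integrator for `h ∈ (0,2)`. -/
def gaussHamMod {d : ℕ} (h : ℝ) (p : ES d × ES d) : ℝ :=
  (1 / 2) * (1 - h ^ 2 / 4) * ‖p.1‖ ^ 2 + (1 / 2) * ‖p.2‖ ^ 2

end

section Aux

variable {d : ℕ} (U : ES d → ℝ) (hs : ℝ) (R : ℕ) (p : ES d × ES d)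

lemma uturnInd_cases (a b : ℤ) : uturnInd U hs R a b p = 0 ∨ uturnInd U hs R a b p = 1 := by
  simp only [uturnInd]; split <;> simp

lemma uturnInd_self (a : ℤ) : uturnInd U hs R a a p = 0 := by
  unfold uturnInd; simp

lemma subUturnInd_cases (a b : ℤ) :
    subUturnInd U hs R p a b = 0 ∨ subUturnInd U hs R p a b = 1 := by
  rw [subUturnInd]
  split
  case isTrue h =>
    have h1 := subUturnInd_cases a (mid a b)
    have h2 := subUturnInd_cases (mid a b + 1) b
    have h3 := uturnInd_cases U hs R p a b
    omega
  case isFalse h => left; rfl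
termination_by (b - a).toNat
decreasing_by
  · have h1 : a ≤ mid a b := by unfold mid; omega
    have h2 : mid a b < b := by unfold mid; omega
    omega
  · have h1 : a ≤ mid a b := by unfold mid; omega
    have h2 : mid a b < b := by unfold mid; omega
    omega

lemma subUturnInd_split {a b : ℤ} (hab : a < b) (h0 : subUturnInd U hs R p a b = 0) :
    subUturnInd U hs R p a (mid a b) = 0 ∧ subUturnInd U hs R p (mid a b + 1) b = 0 ∧
      uturnInd U hs R a b p = 0 := by
  rw [subUturnInd, dif_pos hab] at h0
  omega

lemma subUturnInd_refl (a : ℤ) : subUturnInd U hs R p a a = 0 := by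
  rw [subUturnInd, dif_neg (lt_irrefl a)]

lemma bEnd_eq (B : ℕ → Bool) : ∀ ℓ, bEnd B ℓ = aEnd B ℓ + 2 ^ ℓ - 1 := by
  intro ℓ
  induction ℓ with
  | zero => simp [aEnd, bEnd]
  | succ n ih =>
    have h2 : (0:ℤ) < 2 ^ n := by positivity
    have h3 : (2:ℤ) ^ (n+1) = 2 ^ n + 2 ^ n := by ring
    simp only [aEnd, bEnd, signBit]
    cases B (n+1) <;> simp only [if_true, if_false, Bool.false_eq_true] <;> omega

lemma split_spec (B : ℕ → Bool) (ℓ : ℕ) :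
    (aEnd B (ℓ+1) = aEnd B ℓ ∧ bEnd B (ℓ+1) = bT B (ℓ+1) ∧
      mid (aEnd B (ℓ+1)) (bEnd B (ℓ+1)) = bEnd B ℓ ∧ aT B (ℓ+1) = bEnd B ℓ + 1) ∨
    (aEnd B (ℓ+1) = aT B (ℓ+1) ∧ bEnd B (ℓ+1) = bEnd B ℓ ∧
      mid (aEnd B (ℓ+1)) (bEnd B (ℓ+1)) = bT B (ℓ+1) ∧ aEnd B ℓ = bT B (ℓ+1) + 1) := by
  have hb := bEnd_eq B ℓ
  have h2 : (0:ℤ) < 2 ^ ℓ := by positivity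
  cases hB : B (ℓ+1)
  · left
    simp only [aEnd, bEnd, aT, bT, signBit, mid, hB, Nat.add_sub_cancel, if_false,
      Bool.false_eq_true]
    omega
  · right
    simp only [aEnd, bEnd, aT, bT, signBit, mid, hB, Nat.add_sub_cancel, if_true]
    omega

lemma sub_aEnd_bEnd (M : ℕ) (B : ℕ → Bool) :
    ∀ ℓ, ℓ < ellMin U hs R M B p → subUturnInd U hs R p (aEnd B ℓ) (bEnd B ℓ) = 0 := by
  have hle : ellMin U hs R M B p ≤ M := Nat.sInf_le (by simp)
  have hnot : ∀ j, j < ellMin U hs R M B p → 1 ≤ j → j ≤ M - 1 →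
      uturnInd U hs R (aEnd B j) (bEnd B j) p = 0 ∧
        subUturnInd U hs R p (aT B (j + 1)) (bT B (j + 1)) = 0 := by
    intro j hj h1 h2
    by_contra hcon
    have hmem : j ∈ ({ℓ | 1 ≤ ℓ ∧ ℓ ≤ M - 1 ∧
        (uturnInd U hs R (aEnd B ℓ) (bEnd B ℓ) p = 1 ∨
          subUturnInd U hs R p (aT B (ℓ + 1)) (bT B (ℓ + 1)) = 1)} ∪ {M} : Set ℕ) := by
      left
      refine ⟨h1, h2, ?_⟩
      have c1 := uturnInd_cases U hs R p (aEnd B j) (bEnd B j)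
      have c2 := subUturnInd_cases U hs R p (aT B (j + 1)) (bT B (j + 1))
      omega
    have hle2 : ellMin U hs R M B p ≤ j := Nat.sInf_le hmem
    omega
  intro ℓ
  induction ℓ with
  | zero =>
    intro _
    have : aEnd B 0 = bEnd B 0 := rfl
    rw [this]
    exact subUturnInd_refl U hs R p _
  | succ n ih =>
    intro hlt
    have ihn := ih (by omega)
    have hM : n + 1 ≤ M - 1 := by omega
    have huturn : uturnInd U hs R (aEnd B (n+1)) (bEnd B (n+1)) p = 0 :=
      (hnot (n+1) hlt (by omega) hM).1
    have hsubT : subUturnInd U hs R p (aT B (n + 1)) (bT B (n + 1)) = 0 := by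
      rcases Nat.eq_zero_or_pos n with hn | hn
      · subst hn
        have : aT B 1 = bT B 1 := by simp [aT, bT, aEnd, bEnd]
        rw [this]
        exact subUturnInd_refl U hs R p _
      · exact (hnot n (by omega) hn (by omega)).2
    have hab : aEnd B (n+1) < bEnd B (n+1) := by
      have := bEnd_eq B (n+1)
      have h2 : (2:ℤ) ≤ 2 ^ (n+1) := by
        calc (2:ℤ) = 2 ^ 1 := by ring
        _ ≤ 2 ^ (n+1) := by
          apply pow_le_pow_right₀ (by norm_num) (by omega)
      omega
    rw [subUturnInd, dif_pos hab]
    rcases split_spec B n with ⟨h1, h2, h3, h4⟩ | ⟨h1, h2, h3, h4⟩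
    · rw [h3, ← h4, h1, h2]
      rw [h1, h2] at huturn
      omega
    · rw [h3, ← h4, h1, h2]
      rw [h1, h2] at huturn
      omega

lemma treeLevel_prop (ℓ : ℕ) (a b : ℤ) (hb : b = a + 2 ^ ℓ - 1)
    (h0 : subUturnInd U hs R p a b = 0) :
    ∀ k, k ≤ ℓ → ∀ q ∈ treeLevel a b k,
      q.2 = q.1 + 2 ^ (ℓ - k) - 1 ∧ subUturnInd U hs R p q.1 q.2 = 0 := by
  intro k
  induction k with
  | zero =>
    intro _ q hq
    simp only [treeLevel, Set.mem_singleton_iff] at hq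
    subst hq
    exact ⟨by simpa using hb, h0⟩
  | succ m ih =>
    intro hmℓ q hq
    simp only [treeLevel, Set.mem_setOf_eq] at hq
    obtain ⟨r, hr, hcase⟩ := hq
    obtain ⟨hlen, hsub⟩ := ih (by omega) r hr
    have hpow : (2:ℤ) ^ (ℓ - m) = 2 ^ (ℓ - (m+1)) + 2 ^ (ℓ - (m+1)) := by
      have : ℓ - m = (ℓ - (m+1)) + 1 := by omega
      rw [this]; ring
    have h2 : (0:ℤ) < 2 ^ (ℓ - (m+1)) := by positivity
    have hrlt : r.1 < r.2 := by omega
    have hmid : mid r.1 r.2 = r.1 + 2 ^ (ℓ - (m+1)) - 1 := by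
      unfold mid; omega
    obtain ⟨hs1, hs2, _⟩ := subUturnInd_split U hs R p hrlt hsub
    rcases hcase with hc | hc <;> subst hc
    · exact ⟨by simp [hmid], by simpa using hs1⟩
    · refine ⟨?_, by simpa using hs2⟩
      simp only
      omega

end Aux

/-- For every `ℓ < ℓ_min(θ,ρ,B,h,R)`, the tree `T([a_ℓ(B) : b_ℓ(B)])` is
sub-U-turn free: no interval in it has a U-turn. -/
theorem tree_uturn_free_below_ellMin {d : ℕ} (U : ES d → ℝ) (hU : ContDiff ℝ 1 U)
    (hs : ℝ) (hhs : 0 < hs) (R : ℕ) (hR : 1 ≤ R) (M : ℕ) (B : ℕ → Bool) (p : ES d × ES d) :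
    ∀ ℓ < ellMin U hs R M B p, ∀ q ∈ tree ℓ (aEnd B ℓ) (bEnd B ℓ),
      uturnInd U hs R q.1 q.2 p = 0 := by
  intro ℓ hℓ q hq
  have hsub := sub_aEnd_bEnd U hs R p M B ℓ hℓ
  have hb := bEnd_eq B ℓ
  simp only [tree, Set.mem_iUnion] at hq
  obtain ⟨k, hk, hqk⟩ := hq
  obtain ⟨hlen, hsub'⟩ := treeLevel_prop U hs R p ℓ _ _ hb hsub k hk q hqk
  rcases lt_or_eq_of_le (show q.1 ≤ q.2 by
      have : (0:ℤ) < 2 ^ (ℓ - k) := by positivity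
      omega) with hlt | heq
  · exact (subUturnInd_split U hs R p hlt hsub').2.2
  · rw [← heq]
    exact uturnInd_self U hs R p q.1
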